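/- (Anderson–Hsiao bias under categorically distributed coefficients) Let φ_L, φ_H, π ∈ ℝ with 0 < φ_L < φ_H ≤ 1 and 0 < π < 1, and for a function f : ℝ → ℝ write E[f(φ)] = π f(φ_L) + (1−π) f(φ_H), with μ_φ = E[φ] = π φ_L + (1−π) φ_H. Then E[φ(1−φ)/(1+φ)] / E[(1−φ)/(1+φ)] − μ_φ = −2π(1−π)(φ_H − φ_L)² / (π(1−φ_L)(1+φ_H) + (1−π)(1+φ_L)(1−φ_H)), and the denominator π(1−φ_L)(1+φ_H) + (1−π)(1+φ_L)(1−φ_H) is strictly positive. -/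

import Mathlib

/-- (Anderson–Hsiao bias under categorically distributed coefficients)
Let `φL, φH, π ∈ ℝ` with `0 < φL < φH ≤ 1` and `0 < π < 1`, and write
`E[f(φ)] = π f(φL) + (1−π) f(φH)`, with `μφ = E[φ] = π φL + (1−π) φH`. Then
`E[φ(1−φ)/(1+φ)] / E[(1−φ)/(1+φ)] − μφ
  = −2π(1−π)(φH − φL)² / (π(1−φL)(1+φH) + (1−π)(1+φL)(1−φH))`,
and the denominator is strictly positive. -/
theorem ah_bias_categorical (φL φH π : ℝ)
    (hφL : 0 < φL) (hLH : φL < φH) (hφH : φH ≤ 1) (hπ0 : 0 < π) (hπ1 : π < 1) :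
    0 < π * (1 - φL) * (1 + φH) + (1 - π) * (1 + φL) * (1 - φH) ∧
    (π * (φL * (1 - φL) / (1 + φL)) + (1 - π) * (φH * (1 - φH) / (1 + φH))) /
        (π * ((1 - φL) / (1 + φL)) + (1 - π) * ((1 - φH) / (1 + φH))) -
      (π * φL + (1 - π) * φH) =
      -(2 * π * (1 - π) * (φH - φL) ^ 2) /
        (π * (1 - φL) * (1 + φH) + (1 - π) * (1 + φL) * (1 - φH)) := by
  have hL1 : (0:ℝ) < 1 + φL := by linarith
  have hH1 : (0:ℝ) < 1 + φH := by linarith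
  have hD : 0 < π * (1 - φL) * (1 + φH) + (1 - π) * (1 + φL) * (1 - φH) := by
    have h1 : 0 < π * (1 - φL) * (1 + φH) := by
      apply mul_pos (mul_pos hπ0 (by linarith)) hH1
    have h2 : 0 ≤ (1 - π) * (1 + φL) * (1 - φH) := by
      apply mul_nonneg (mul_nonneg (by linarith) (by linarith)) (by linarith)
    linarith
  refine ⟨hD, ?_⟩
  have hden : π * ((1 - φL) / (1 + φL)) + (1 - π) * ((1 - φH) / (1 + φH)) =
      (π * (1 - φL) * (1 + φH) + (1 - π) * (1 + φL) * (1 - φH)) /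
        ((1 + φL) * (1 + φH)) := by
    field_simp
  rw [hden]
  have hprod : (0:ℝ) < (1 + φL) * (1 + φH) := mul_pos hL1 hH1
  rw [div_div_eq_mul_div]
  rw [div_sub' hD.ne', div_eq_div_iff hD.ne' hD.ne']
  field_simp
  ring
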